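/- For the 3-dimensional Heisenberg algebra with basis {u,v,e}, bracket [v,e]=u, and inner product ⟨u,v⟩=1, ⟨e,e⟩=ε̄ (all other products zero), the Levi-Civita connection of the associated left-invariant metric satisfies ∇_v v = −ε̄ e and ∇_v e = u, with all other covariant derivatives of basis vectors vanishing; consequently the curvature tensor vanishes identically. -/
import Mathlib


/-- The 3-dimensional Heisenberg algebra with null center: basis `{u, v, e}`,
bracket `[v,e] = u`, inner products `⟨u,v⟩ = 1`, `⟨e,e⟩ = ε̄` (all others zero).
We model it on `ℝ × ℝ × ℝ` with `u = (1,0,0)`, `v = (0,1,0)`, `e = (0,0,1)`.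
The Levi-Civita connection `∇_x y = ½([x,y] - ad⁺_x y - ad⁺_y x)` of the associated
left-invariant metric satisfies `∇_v v = -ε̄ e` and `∇_v e = u`, with all other
covariant derivatives of basis vectors vanishing; consequently the curvature tensor
`R(x,y)w = ∇_x ∇_y w - ∇_y ∇_x w - ∇_{[x,y]} w` vanishes identically. -/
theorem heisenberg_null_center_connection_and_flat
    (eps : ℝ) (heps : eps = 1 ∨ eps = -1)
    (br : ℝ × ℝ × ℝ → ℝ × ℝ × ℝ → ℝ × ℝ × ℝ)
    (hbr : ∀ x y, br x y = (x.2.1 * y.2.2 - x.2.2 * y.2.1, 0, 0))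
    (B : ℝ × ℝ × ℝ → ℝ × ℝ × ℝ → ℝ)
    (hB : ∀ x y, B x y = x.1 * y.2.1 + x.2.1 * y.1 + eps * x.2.2 * y.2.2)
    (adP : ℝ × ℝ × ℝ → ℝ × ℝ × ℝ → ℝ × ℝ × ℝ)
    (hadP : ∀ x y w, B (adP x y) w = B y (br x w))
    (nabla : ℝ × ℝ × ℝ → ℝ × ℝ × ℝ → ℝ × ℝ × ℝ)
    (hnabla : ∀ x y, nabla x y = (2:ℝ)⁻¹ • (br x y - adP x y - adP y x))
    (R : ℝ × ℝ × ℝ → ℝ × ℝ × ℝ → ℝ × ℝ × ℝ → ℝ × ℝ × ℝ)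
    (hR : ∀ x y w, R x y w = nabla x (nabla y w) - nabla y (nabla x w) - nabla (br x y) w)
    (u v e : ℝ × ℝ × ℝ) (hu : u = (1,0,0)) (hv : v = (0,1,0)) (he : e = (0,0,1)) :
    nabla v v = (-eps) • e ∧ nabla v e = u ∧
    nabla u u = 0 ∧ nabla u v = 0 ∧ nabla v u = 0 ∧ nabla u e = 0 ∧
    nabla e u = 0 ∧ nabla e v = 0 ∧ nabla e e = 0 ∧
    (∀ x y w, R x y w = 0) := by

  have heps2 : eps * eps = 1 := by rcases heps with h|h <;> rw [h] <;> ring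
  have hadP' : ∀ x y : ℝ × ℝ × ℝ, adP x y = (-(x.2.2*y.2.1), 0, eps*(x.2.1*y.2.1)) := by
    intro x y
    have h1 := hadP x y (1,0,0)
    have h2 := hadP x y (0,1,0)
    have h3 := hadP x y (0,0,1)
    rw [hB, hB, hbr] at h1 h2 h3
    simp at h1 h2 h3
    refine Prod.ext ?_ (Prod.ext ?_ ?_)
    · simp; linear_combination h2
    · simpa using h1
    · simp; linear_combination eps*h3 - (adP x y).2.2 * heps2
  have hnabla' : ∀ x y : ℝ × ℝ × ℝ, nabla x y = (x.2.1*y.2.2, 0, -(eps*(x.2.1*y.2.1))) := by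
    intro x y
    rw [hnabla, hadP', hadP', hbr]
    refine Prod.ext ?_ (Prod.ext ?_ ?_) <;> simp <;> ring
  subst hu hv he
  refine ⟨?_, ?_, ?_, ?_, ?_, ?_, ?_, ?_, ?_, ?_⟩
  · rw [hnabla']; refine Prod.ext ?_ (Prod.ext ?_ ?_) <;> simp
  · rw [hnabla']; simp
  · rw [hnabla']; simp
  · rw [hnabla']; simp
  · rw [hnabla']; simp
  · rw [hnabla']; simp
  · rw [hnabla']; simp
  · rw [hnabla']; simp
  · rw [hnabla']; simp
  · intro x y w
    rw [hR, hnabla', hnabla', hnabla', hnabla', hnabla', hbr]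
    refine Prod.ext ?_ (Prod.ext ?_ ?_) <;> simp <;> ring
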